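/- arXiv:2310.04980 — 4 statements merged into one kernel-verified Lean document; each statement's English description precedes it below -/
import Mathlib

section
/- Let G be a group, H ≤ G a subgroup, and K ≤ [G, H] a subgroup of finite index in [G, H]. Assume: (1) K is normal in G; (2) H is generated by finitely many elements h₁, …, h_M together with a subgroup H' ≤ H such that [G, H'] ⊆ K. Then there exists a finite-index normal subgroup G' of G such that [G', H] ⊆ K. -/
open scoped commutatorElement

/-- Let `K ≤ ⁅G, H⁆` be a finite-index subgroup of `⁅G, H⁆`, normal in `G`.  Assume `H`
is generated by finitely many elements `h₁, …, h_M` together with a subgroup `H'` with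
`⁅G, H'⁆ ⊆ K`.  Then there is a finite-index normal subgroup `G'` of `G` with `⁅G', H⁆ ⊆ K`. -/
theorem exists_finiteIndex_normal_commutator_le {G : Type*} [Group G]
    (H H' K : Subgroup G) (M : ℕ) (h : Fin M → G)
    (hK : K ≤ ⁅(⊤ : Subgroup G), H⁆)
    (hfin : (K.subgroupOf ⁅(⊤ : Subgroup G), H⁆).FiniteIndex)
    (hnorm : K.Normal)
    (hH'le : H' ≤ H)
    (hgen : H = Subgroup.closure (Set.range h) ⊔ H')
    (hH' : ⁅(⊤ : Subgroup G), H'⁆ ≤ K) :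
    ∃ G' : Subgroup G, G'.Normal ∧ G'.FiniteIndex ∧ ⁅G', H⁆ ≤ K := by
  classical
  set Q := G ⧸ K
  set φ : G →* Q := QuotientGroup.mk' K with hφ
  have hφsurj : Function.Surjective φ := QuotientGroup.mk'_surjective K
  set S : Subgroup G := ⁅(⊤ : Subgroup G), H⁆ with hS
  -- the image of ⁅G, H⁆ in the quotient is finite
  have hfinT : (S.map φ : Set Q).Finite := by
    have h1 : Finite (S ⧸ (K.subgroupOf S)) := by
      have := hfin.index_ne_zero
      rw [Subgroup.index] at this
      exact Nat.finite_of_card_ne_zero this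
    have hker : (φ.comp S.subtype).ker = K.subgroupOf S := by
      have hk : φ.ker = K := QuotientGroup.ker_mk' K
      rw [← MonoidHom.comap_ker, hk, Subgroup.subgroupOf]
    have hrange : (φ.comp S.subtype).range = S.map φ := by
      rw [MonoidHom.range_comp, Subgroup.range_subtype]
    have h2 : Finite (↥S ⧸ (φ.comp S.subtype).ker) := by rw [hker]; exact h1
    have h3 : Finite (φ.comp S.subtype).range :=
      Finite.of_equiv _ (QuotientGroup.quotientKerEquivRange (φ.comp S.subtype)).toEquiv
    have h4 : Finite (S.map φ) := by rw [← hrange]; exact h3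
    exact (S.map φ : Set Q).toFinite
  -- the conjugacy orbit of each `φ (h i)` is finite
  have hhiH : ∀ i, h i ∈ H := by
    intro i
    rw [hgen]
    exact Subgroup.mem_sup_left (Subgroup.subset_closure ⟨i, rfl⟩)
  have horb : ∀ i, (MulAction.orbit (ConjAct Q) (φ (h i))).Finite := by
    intro i
    apply (hfinT.image (fun t => t * φ (h i))).subset
    rintro x ⟨g, rfl⟩
    refine ⟨⁅ConjAct.ofConjAct g, φ (h i)⁆, ?_, ?_⟩
    · have hmap : S.map φ = ⁅(⊤ : Subgroup Q), H.map φ⁆ := by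
        rw [hS, Subgroup.map_commutator, Subgroup.map_top_of_surjective _ hφsurj]
      rw [hmap]
      exact Subgroup.commutator_mem_commutator (Subgroup.mem_top _)
        (Subgroup.mem_map_of_mem φ (hhiH i))
    · simp [ConjAct.smul_def, commutatorElement_def, mul_assoc]
  -- each centralizer has finite index
  have hcent : ∀ i, ((Subgroup.centralizer {φ (h i)}).comap φ).FiniteIndex := by
    intro i
    constructor
    rw [Subgroup.index_comap_of_surjective _ hφsurj,
      Subgroup.centralizer_eq_comap_stabilizer]
    erw [Subgroup.index_comap_of_surjective _ (MulEquiv.surjective _)]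
    erw [MulAction.index_stabilizer]
    intro h0
    rw [Set.ncard_eq_zero (horb i)] at h0
    exact absurd (MulAction.mem_orbit_self (φ (h i))) (by rw [h0]; exact Set.notMem_empty _)
  -- assemble the finite-index subgroup
  set G₀ : Subgroup G := ⨅ i, (Subgroup.centralizer {φ (h i)}).comap φ with hG₀
  have hG₀fin : G₀.FiniteIndex := by
    constructor
    exact Subgroup.index_iInf_ne_zero fun i => (hcent i).index_ne_zero
  have hG₀comm : ⁅G₀, H⁆ ≤ K := by
    rw [Subgroup.commutator_le]
    intro g hg x hx
    -- the set of elements whose image commutes with φ g contains H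
    have hxD : x ∈ (Subgroup.centralizer {φ g}).comap φ := by
      have hle : H ≤ (Subgroup.centralizer {φ g}).comap φ := by
        rw [hgen]
        refine sup_le (Subgroup.closure_le _ |>.mpr ?_) ?_
        · rintro _ ⟨i, rfl⟩
          have hgi : g ∈ (Subgroup.centralizer {φ (h i)}).comap φ :=
            (Subgroup.mem_iInf.mp hg) i
          simp only [SetLike.mem_coe, Subgroup.mem_comap, Subgroup.mem_centralizer_iff,
            Set.mem_singleton_iff, forall_eq] at hgi ⊢
          exact hgi.symm
        · intro y hy
          simp only [Subgroup.mem_comap, Subgroup.mem_centralizer_iff,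
            Set.mem_singleton_iff, forall_eq]
          have : ⁅g, y⁆ ∈ K := hH' (Subgroup.commutator_mem_commutator (Subgroup.mem_top g) hy)
          have h1 : φ ⁅g, y⁆ = 1 := (QuotientGroup.eq_one_iff _).mpr this
          rw [map_commutatorElement] at h1
          exact (commutatorElement_eq_one_iff_commute.mp h1).eq
      exact hle hx
    simp only [Subgroup.mem_comap, Subgroup.mem_centralizer_iff,
      Set.mem_singleton_iff, forall_eq] at hxD
    have h1 : φ ⁅g, x⁆ = 1 := by
      rw [map_commutatorElement]
      exact commutatorElement_eq_one_iff_commute.mpr hxD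
    exact (QuotientGroup.eq_one_iff _).mp h1
  refine ⟨G₀.normalCore, Subgroup.normalCore_normal _, inferInstance, ?_⟩
  exact le_trans (Subgroup.commutator_mono (Subgroup.normalCore_le _) le_rfl) hG₀comm
end

section
/- Let V be a finite-dimensional vector space of dimension n over a field, and let G ≤ GL(V) be a subgroup all of whose elements are unipotent. Then for any elements g₁, …, g_m, h₁, …, h_m ∈ G with m ≥ n, the composition h₁(Id − g₁) ⋯ h_m(Id − g_m) is the zero endomorphism of V. -/
open Module LinearMap
open scoped TensorProduct
set_option maxHeartbeats 1000000
set_option synthInstance.maxHeartbeats 200000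

namespace UnipotentKolchinAux

universe u

section Density

variable {K : Type*} {V : Type u} [Field K] [AddCommGroup V] [Module K V]
variable {A : Subalgebra K (Module.End K V)}

theorem isSimpleModule_of_irreducible [Nontrivial V]
    (hirr : ∀ W : Submodule K V, (∀ a ∈ A, ∀ v ∈ W, a v ∈ W) → W = ⊥ ∨ W = ⊤) :
    IsSimpleModule A V := by
  haveI : Nontrivial (Submodule A V) := Submodule.nontrivial_iff A |>.mpr inferInstance
  refine { toIsSimpleOrder := { eq_bot_or_eq_top := ?_ } }
  intro p
  let W : Submodule K V :=
    { carrier := p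
      add_mem' := fun ha hb => p.add_mem ha hb
      zero_mem' := p.zero_mem
      smul_mem' := fun k v hv => by
        have h1 : (⟨algebraMap K (Module.End K V) k, Subalgebra.algebraMap_mem A k⟩ : A) • v ∈ p :=
          p.smul_mem _ hv
        have h2 : (⟨algebraMap K (Module.End K V) k, Subalgebra.algebraMap_mem A k⟩ : A) • v
            = k • v := by
          show (algebraMap K (Module.End K V) k) v = k • v
          simp [Module.algebraMap_end_apply]
        rwa [h2] at h1 }
  have hWp : ∀ x : V, x ∈ W ↔ x ∈ p := fun x => Iff.rfl
  rcases hirr W (fun a ha v hv => p.smul_mem (⟨a, ha⟩ : A) hv) with h | h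
  · left
    rw [Submodule.eq_bot_iff] at h ⊢
    exact fun x hx => h x ((hWp x).mpr hx)
  · right
    rw [Submodule.eq_top_iff'] at h ⊢
    exact fun x => (hWp x).mp (h x)

/-- Over an algebraically closed field, an `A`-endomorphism of a simple `A`-module is scalar. -/
theorem endo_eq_scalar [IsAlgClosed K] [FiniteDimensional K V]
    (hsimp : IsSimpleModule A V) (f : V →ₗ[A] V) : ∃ c : K, ∀ v : V, f v = c • v := by
  haveI : Nontrivial V := IsSimpleModule.nontrivial A V
  let e : Module.End K V :=
    { toFun := f
      map_add' := f.map_add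
      map_smul' := fun k v => by
        have h2 : ∀ w : V, (⟨algebraMap K (Module.End K V) k,
            Subalgebra.algebraMap_mem A k⟩ : A) • w = k • w := fun w => by
          show (algebraMap K (Module.End K V) k) w = k • w
          simp [Module.algebraMap_end_apply]
        simp only [RingHom.id_apply]
        rw [← h2 v, f.map_smul, h2] }
  obtain ⟨c, hc⟩ := Module.End.exists_eigenvalue e
  obtain ⟨v, hv⟩ := hc.exists_hasEigenvector
  -- the kernel of f - c • id is a nonzero A-submodule
  let km : Submodule A V :=
    { carrier := {w : V | f w = c • w}
      add_mem' := fun {x y} hx hy => by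
        simp only [Set.mem_setOf_eq] at *
        rw [f.map_add, hx, hy, smul_add]
      zero_mem' := by simp
      smul_mem' := fun a w hw => by
        simp only [Set.mem_setOf_eq] at *
        rw [f.map_smul, hw]
        show (a : Module.End K V) (c • w) = c • (a : Module.End K V) w
        exact (a : Module.End K V).map_smul c w }
  have hvmem : v ∈ km := by
    have := hv.apply_eq_smul
    exact this
  have : km = ⊤ := by
    rcases hsimp.1.2 km with h | h
    · exfalso
      rw [Submodule.eq_bot_iff] at h
      exact hv.2 (h v hvmem)
    · exact h
  refine ⟨c, fun w => ?_⟩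
  have : w ∈ km := this ▸ Submodule.mem_top
  exact this

theorem density [IsAlgClosed K] [FiniteDimensional K V]
    (hsimp : IsSimpleModule A V) (k : ℕ) (v : Fin k → V) (hv : LinearIndependent K v)
    (w : Fin k → V) : ∃ a ∈ A, ∀ i, a (v i) = w i := by
  haveI : Nontrivial V := IsSimpleModule.nontrivial A V
  induction k with
  | zero => exact ⟨0, A.zero_mem, fun i => i.elim0⟩
  | succ k ih =>
    set v' : Fin k → V := fun i => v i.castSucc with hv'def
    set x : V := v (Fin.last k) with hxdef
    have hsnoc : Fin.snoc v' x = v := by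
      funext i
      exact congrFun (Fin.snoc_init_self v) i
    have hv' : LinearIndependent K v' := by
      rw [← hsnoc] at hv
      exact (linearIndependent_fin_snoc.mp hv).1
    have hx : x ∉ Submodule.span K (Set.range v') := by
      rw [← hsnoc] at hv
      exact (linearIndependent_fin_snoc.mp hv).2
    -- Key claim : some element of A kills all v' i but not x
    have key : ∃ a₀ ∈ A, (∀ i, a₀ (v' i) = 0) ∧ a₀ x ≠ 0 := by
      by_contra hcon
      push_neg at hcon
      -- build the A-linear maps
      let Φ : A →ₗ[A] (Fin k → V) := LinearMap.pi fun i => LinearMap.toSpanSingleton A V (v' i)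
      let Ψ : A →ₗ[A] V := LinearMap.toSpanSingleton A V x
      have hker : LinearMap.ker Φ ≤ LinearMap.ker Ψ := by
        intro a ha
        rw [LinearMap.mem_ker] at ha ⊢
        have h0 : ∀ i, (a : Module.End K V) (v' i) = 0 := fun i => congrFun ha i
        exact hcon (a : Module.End K V) a.2 h0
      haveI : IsSemisimpleModule A (Fin k → V) := by
        refine isSemisimpleModule_of_isSemisimpleModule_submodule'
          (p := fun i => LinearMap.range (LinearMap.single A (fun _ : Fin k => V) i)) ?_ ?_
        · intro i
          haveI : IsSimpleModule A
              ↥(LinearMap.range (LinearMap.single A (fun _ : Fin k => V) i)) :=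
            IsSimpleModule.congr
              (LinearEquiv.ofInjective (LinearMap.single A (fun _ : Fin k => V) i)
                (Pi.single_injective (M := fun _ : Fin k => V) i)).symm
          infer_instance
        · exact LinearMap.iSup_range_single A _
      obtain ⟨C, hC⟩ := exists_isCompl (LinearMap.range Φ)
      let F₀ : A ⧸ LinearMap.ker Φ →ₗ[A] V := (LinearMap.ker Φ).liftQ Ψ hker
      let eΦ := Φ.quotKerEquivRange
      let F : (Fin k → V) →ₗ[A] V :=
        F₀ ∘ₗ (eΦ.symm : ↥(LinearMap.range Φ) →ₗ[A] A ⧸ LinearMap.ker Φ) ∘ₗ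
          Submodule.linearProjOfIsCompl (LinearMap.range Φ) C hC
      -- F agrees with Ψ on the range of Φ
      have hF : ∀ a : A, F (Φ a) = Ψ a := by
        intro a
        have h1 : Submodule.linearProjOfIsCompl (LinearMap.range Φ) C hC (Φ a)
            = ⟨Φ a, LinearMap.mem_range_self Φ a⟩ :=
          Submodule.linearProjOfIsCompl_apply_left hC ⟨Φ a, LinearMap.mem_range_self Φ a⟩
        have h2 : eΦ ((LinearMap.ker Φ).mkQ a) = ⟨Φ a, LinearMap.mem_range_self Φ a⟩ :=
          Subtype.ext (Φ.quotKerEquivRange_apply_mk a)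
        have h3 : eΦ.symm ⟨Φ a, LinearMap.mem_range_self Φ a⟩ = (LinearMap.ker Φ).mkQ a := by
          rw [← h2, LinearEquiv.symm_apply_apply]
        show F₀ (eΦ.symm (Submodule.linearProjOfIsCompl (LinearMap.range Φ) C hC (Φ a))) = Ψ a
        rw [h1, h3]
        exact Submodule.liftQ_apply _ Ψ a
      -- each coordinate of F is a scalar
      have hcoord : ∀ i : Fin k, ∃ c : K, ∀ u : V,
          F (LinearMap.single A (fun _ : Fin k => V) i u) = c • u := fun i =>
        endo_eq_scalar hsimp (F ∘ₗ LinearMap.single A (fun _ : Fin k => V) i)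
      choose c hc using hcoord
      -- evaluate at a = 1
      have h1 : Φ (1 : A) = fun i => v' i := by
        funext i
        show ((1 : A) : Module.End K V) (v' i) = v' i
        rfl
      have h2 : Ψ (1 : A) = x := by
        show ((1 : A) : Module.End K V) x = x
        rfl
      have hdecomp : (fun i => v' i) = ∑ i : Fin k,
          LinearMap.single A (fun _ : Fin k => V) i (v' i) := by
        funext j
        rw [Finset.sum_apply]
        simp [LinearMap.single_apply, Pi.single_apply, Finset.sum_ite_eq']
      have : x = ∑ i : Fin k, c i • v' i := by
        rw [← h2, ← hF 1, h1, hdecomp, map_sum]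
        exact Finset.sum_congr rfl fun i _ => hc i (v' i)
      exact hx (this ▸ Submodule.sum_mem _ fun i _ =>
        Submodule.smul_mem _ _ (Submodule.subset_span (Set.mem_range_self i)))
    obtain ⟨a₀, ha₀A, ha₀v', ha₀x⟩ := key
    obtain ⟨b, hbA, hb⟩ := ih v' hv' fun i => w i.castSucc
    let T : Submodule A V :=
      { carrier := {z | ∃ a : Module.End K V, a ∈ A ∧ (∀ i, a (v' i) = 0) ∧ a x = z}
        add_mem' := by
          rintro y z ⟨a, haA, hav, hax⟩ ⟨a', ha'A, ha'v, ha'x⟩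
          exact ⟨a + a', A.add_mem haA ha'A, fun i => by
            simp [LinearMap.add_apply, hav i, ha'v i], by
            simp [LinearMap.add_apply, hax, ha'x]⟩
        zero_mem' := ⟨0, A.zero_mem, fun i => rfl, rfl⟩
        smul_mem' := by
          rintro r z ⟨a, haA, hav, hax⟩
          refine ⟨(r : Module.End K V) * a, A.mul_mem r.2 haA, fun i => ?_, ?_⟩
          · show (r : Module.End K V) (a (v' i)) = 0
            rw [hav i, map_zero]
          · show (r : Module.End K V) (a x) = r • z
            rw [hax]; rfl }
    have hTne : T ≠ ⊥ := by
      intro hT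
      apply ha₀x
      have hmem : a₀ x ∈ T := ⟨a₀, ha₀A, ha₀v', rfl⟩
      rw [hT, Submodule.mem_bot] at hmem
      exact hmem
    have hTtop : T = ⊤ := (hsimp.1.2 T).resolve_left hTne
    have hwx : w (Fin.last k) - b x ∈ T := hTtop ▸ Submodule.mem_top
    obtain ⟨cc, hccA, hccv, hccx⟩ := hwx
    refine ⟨b + cc, A.add_mem hbA hccA, fun i => ?_⟩
    refine Fin.lastCases ?_ (fun j => ?_) i
    · show (b + cc) x = w (Fin.last k)
      rw [LinearMap.add_apply, hccx, add_sub_cancel]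
    · show (b + cc) (v' j) = w j.castSucc
      rw [LinearMap.add_apply, hb j, hccv j, add_zero]

/-- Burnside's theorem. -/
theorem subalgebra_eq_top_of_irreducible [IsAlgClosed K] [FiniteDimensional K V] [Nontrivial V]
    (hirr : ∀ W : Submodule K V, (∀ a ∈ A, ∀ v ∈ W, a v ∈ W) → W = ⊥ ∨ W = ⊤)
    (f : Module.End K V) : f ∈ A := by
  have hsimp := isSimpleModule_of_irreducible hirr
  let b := Module.finBasis K V
  obtain ⟨a, haA, ha⟩ := density hsimp (finrank K V) b b.linearIndependent fun i => f (b i)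
  have hab : a = f := b.ext ha
  rwa [← hab]

end Density

section Kolchin

variable {K : Type*} [Field K]

theorem trace_unit_eq {V : Type u} [AddCommGroup V] [Module K V] [FiniteDimensional K V]
    (w : Module.End K V) (hw : IsNilpotent (w - 1)) :
    trace K V w = trace K V (1 : Module.End K V) := by
  have h1 : w = 1 + (w - 1) := by abel
  rw [h1, map_add, (LinearMap.isNilpotent_trace_of_isNilpotent hw).eq_zero, add_zero]

theorem kolchin_fixed [IsAlgClosed K] :
    ∀ (k : ℕ) {V : Type u} [AddCommGroup V] [Module K V] [FiniteDimensional K V],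
      finrank K V ≤ k → Nontrivial V →
      ∀ G : Subgroup (Module.End K V)ˣ,
        (∀ u ∈ G, IsNilpotent ((u : Module.End K V) - 1)) →
        ∃ v : V, v ≠ 0 ∧ ∀ u ∈ G, (u : Module.End K V) v = v := by
  intro k
  induction k with
  | zero =>
    intro V _ _ _ hle hnt G hG
    exfalso
    have : 0 < finrank K V := Module.finrank_pos
    omega
  | succ k ih =>
    intro V _ _ _ hle hnt G hG
    by_cases hcase : ∃ W : Submodule K V, W ≠ ⊥ ∧ W ≠ ⊤ ∧
        ∀ u ∈ G, ∀ v ∈ W, (u : Module.End K V) v ∈ W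
    · obtain ⟨W, hWbot, hWtop, hWinv⟩ := hcase
      haveI : Nontrivial W := Submodule.nontrivial_iff_ne_bot.mpr hWbot
      have hWrank : finrank K W ≤ k := by
        have h2 : finrank K W < finrank K V := Submodule.finrank_lt hWtop
        omega
      have hmem : ∀ u : G, ∀ v ∈ W, ((u : (Module.End K V)ˣ) : Module.End K V) v ∈ W :=
        fun u => hWinv u u.2
      have hcomp : ∀ u₁ u₂ : G,
          (((u₁ : (Module.End K V)ˣ) : Module.End K V).restrict (hmem u₁)) ∘ₗ
            (((u₂ : (Module.End K V)ˣ) : Module.End K V).restrict (hmem u₂))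
          = ((((u₁ * u₂ : G) : (Module.End K V)ˣ) : Module.End K V).restrict (hmem (u₁ * u₂))) := by
        intro u₁ u₂
        ext x
        simp [LinearMap.restrict_apply, Module.End.mul_apply]
      have hres_inv : ∀ u : G,
          (((u : (Module.End K V)ˣ) : Module.End K V).restrict (hmem u)) *
            ((((u⁻¹ : G) : (Module.End K V)ˣ) : Module.End K V).restrict (hmem u⁻¹)) = 1 := by
        intro u
        rw [Module.End.mul_eq_comp, hcomp u u⁻¹, mul_inv_cancel]
        ext x
        simp [LinearMap.restrict_apply]
      let ρ : G →* (Module.End K W)ˣ :=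
        { toFun := fun u =>
            { val := ((u : (Module.End K V)ˣ) : Module.End K V).restrict (hmem u)
              inv := (((u⁻¹ : G) : (Module.End K V)ˣ) : Module.End K V).restrict (hmem u⁻¹)
              val_inv := hres_inv u
              inv_val := by
                have := hres_inv u⁻¹
                rwa [inv_inv] at this }
          map_one' := by
            apply Units.ext
            show (((1 : G) : (Module.End K V)ˣ) : Module.End K V).restrict (hmem 1)
              = (1 : Module.End K W)
            ext x
            simp [LinearMap.restrict_apply]
          map_mul' := fun u₁ u₂ => by
            apply Units.ext
            exact ((hcomp u₁ u₂).symm : _) }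
      have hG' : ∀ u' ∈ ρ.range, IsNilpotent ((u' : Module.End K W) - 1) := by
        rintro u' ⟨u, rfl⟩
        obtain ⟨j, hj⟩ := hG u u.2
        refine ⟨j, ?_⟩
        have hmemN : ∀ v ∈ W, ((u : (Module.End K V)ˣ) : Module.End K V) v - v ∈ W :=
          fun v hv => W.sub_mem (hmem u v hv) hv
        have hval : (ρ u : Module.End K W)
            = ((u : (Module.End K V)ˣ) : Module.End K V).restrict (hmem u) := rfl
        have hsub : (ρ u : Module.End K W) - 1
            = (((u : (Module.End K V)ˣ) : Module.End K V) - 1).restrict hmemN := by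
          rw [hval]
          ext x
          simp [LinearMap.restrict_apply, LinearMap.sub_apply]
        rw [hsub, Module.End.pow_restrict]
        refine LinearMap.ext fun x => Subtype.ext ?_
        simp [LinearMap.restrict_coe_apply, hj]
      obtain ⟨v, hv0, hvfix⟩ := ih hWrank inferInstance ρ.range hG'
      refine ⟨(v : V), fun h => hv0 (Subtype.ext h), fun u hu => ?_⟩
      have hfix := hvfix (ρ ⟨u, hu⟩) ⟨⟨u, hu⟩, rfl⟩
      have h2 : ((u : Module.End K V)).restrict (hmem ⟨u, hu⟩) v = v := hfix
      have h3 := congrArg (Subtype.val) h2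
      rwa [LinearMap.restrict_coe_apply] at h3
    · push_neg at hcase
      have hinv : ∀ W : Submodule K V, (∀ u ∈ G, ∀ v ∈ W, (u : Module.End K V) v ∈ W) →
          W = ⊥ ∨ W = ⊤ := by
        intro W hW
        by_contra hcon
        push_neg at hcon
        obtain ⟨u, hu, v, hv, hnot⟩ := hcase W hcon.1 hcon.2
        exact hnot (hW u hu v hv)
      have hall : ∀ u ∈ G, (u : Module.End K V) = 1 := by
        intro u hu
        by_contra hne
        let SM : Submonoid (Module.End K V) :=
          Submonoid.map (Units.coeHom (Module.End K V)) G.toSubmonoid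
        let A : Subalgebra K (Module.End K V) := Algebra.adjoin K (SM : Set (Module.End K V))
        have hSA : ∀ g ∈ G, ((g : Module.End K V)) ∈ A := fun g hg =>
          Algebra.subset_adjoin ⟨g, hg, rfl⟩
        have hirr : ∀ W : Submodule K V, (∀ a ∈ A, ∀ v ∈ W, a v ∈ W) → W = ⊥ ∨ W = ⊤ :=
          fun W hW => hinv W fun g hg v hv => hW _ (hSA g hg) v hv
        have htop : ∀ f : Module.End K V, f ∈ A := subalgebra_eq_top_of_irreducible hirr
        set N : Module.End K V := (u : Module.End K V) - 1 with hNdef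
        have htrace : ∀ a ∈ A, trace K V (N * a) = 0 := by
          intro a ha
          have hspan : a ∈ Submodule.span K (SM : Set (Module.End K V)) := by
            have h1 : a ∈ Subalgebra.toSubmodule (Algebra.adjoin K (SM : Set (Module.End K V))) :=
              ha
            rw [Algebra.adjoin_eq_span, Submonoid.closure_eq] at h1
            exact h1
          clear ha
          induction hspan using Submodule.span_induction with
          | mem z hz =>
            obtain ⟨g, hg, rfl⟩ := hz
            have h2 : N * (Units.coeHom (Module.End K V)) g
                = ((u * g : (Module.End K V)ˣ) : Module.End K V)
                  - ((g : (Module.End K V)ˣ) : Module.End K V) := by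
              rw [hNdef, sub_mul, one_mul]
              rfl
            rw [h2, map_sub, trace_unit_eq _ (hG _ (G.mul_mem hu hg)),
              trace_unit_eq _ (hG _ hg), sub_self]
          | zero => rw [mul_zero, map_zero]
          | add y z _ _ hy hz => rw [mul_add, map_add, hy, hz, add_zero]
          | smul c y _ hy => rw [mul_smul_comm, map_smul, hy, smul_zero]
        have hNne : N ≠ 0 := fun h => hne (by rwa [hNdef, sub_eq_zero] at h)
        obtain ⟨v, hv⟩ : ∃ v : V, N v ≠ 0 := by
          by_contra hcon2
          push_neg at hcon2
          exact hNne (LinearMap.ext fun x => by rw [hcon2 x, LinearMap.zero_apply])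
        obtain ⟨φ, hφ⟩ : ∃ φ : Module.Dual K V, φ (N v) ≠ 0 := by
          by_contra hcon3
          push_neg at hcon3
          exact hv ((Module.forall_dual_apply_eq_zero_iff K (N v)).mp hcon3)
        apply hφ
        have ha : N * dualTensorHom K V V (φ ⊗ₜ[K] v) = dualTensorHom K V V (φ ⊗ₜ[K] (N v)) := by
          ext x
          simp [Module.End.mul_apply, dualTensorHom_apply, map_smul]
        have := htrace _ (htop (dualTensorHom K V V (φ ⊗ₜ[K] v)))
        rwa [ha, LinearMap.trace_eq_contract_apply, contractLeft_apply] at this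
      obtain ⟨v, hv⟩ := exists_ne (0 : V)
      exact ⟨v, hv, fun u hu => by rw [hall u hu]; rfl⟩

end Kolchin

section Main

variable {K : Type*} [Field K]

theorem prod_comm_quot {V Q : Type u} [AddCommGroup V] [Module K V] [AddCommGroup Q] [Module K Q]
    (π : V →ₗ[K] Q) :
    ∀ (m : ℕ) (f : Fin m → Module.End K V) (fq : Fin m → Module.End K Q),
      (∀ i, fq i ∘ₗ π = π ∘ₗ f i) →
      (List.ofFn fq).prod ∘ₗ π = π ∘ₗ (List.ofFn f).prod := by
  intro m
  induction m with
  | zero =>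
    intro f fq h
    exact LinearMap.ext fun x => rfl
  | succ m ih =>
    intro f fq h
    rw [List.ofFn_succ, List.ofFn_succ, List.prod_cons, List.prod_cons]
    have hih := ih (fun i => f i.succ) (fun i => fq i.succ) fun i => h i.succ
    calc (fq 0 * (List.ofFn fun i => fq i.succ).prod) ∘ₗ π
        = fq 0 ∘ₗ ((List.ofFn fun i => fq i.succ).prod ∘ₗ π) := by
          rw [Module.End.mul_eq_comp, LinearMap.comp_assoc]
      _ = fq 0 ∘ₗ (π ∘ₗ (List.ofFn fun i => f i.succ).prod) := by rw [hih]
      _ = (fq 0 ∘ₗ π) ∘ₗ (List.ofFn fun i => f i.succ).prod := by rw [LinearMap.comp_assoc]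
      _ = (π ∘ₗ f 0) ∘ₗ (List.ofFn fun i => f i.succ).prod := by rw [h 0]
      _ = π ∘ₗ (f 0 * (List.ofFn fun i => f i.succ).prod) := by
          rw [Module.End.mul_eq_comp, LinearMap.comp_assoc]

theorem main_alg_closed [IsAlgClosed K] :
    ∀ (k : ℕ) {V : Type u} [AddCommGroup V] [Module K V] [FiniteDimensional K V],
      finrank K V ≤ k →
      ∀ G : Subgroup (Module.End K V)ˣ,
        (∀ u ∈ G, IsNilpotent ((u : Module.End K V) - 1)) →
        ∀ (m : ℕ), finrank K V ≤ m → ∀ gs hs : Fin m → G,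
          (List.ofFn fun i => ((hs i : (Module.End K V)ˣ) : Module.End K V) *
            (1 - ((gs i : (Module.End K V)ˣ) : Module.End K V))).prod = 0 := by
  intro k
  induction k with
  | zero =>
    intro V _ _ _ hle G hG m hm gs hs
    haveI : Subsingleton V := by
      rw [← Module.finrank_zero_iff (R := K) (M := V)]
      omega
    exact Subsingleton.elim _ _
  | succ k ih =>
    intro V _ _ _ hle G hG m hm gs hs
    by_cases hk : finrank K V ≤ k
    · exact ih hk G hG m hm gs hs
    have hrank : finrank K V = k + 1 := by omega
    haveI : Nontrivial V := by
      rw [← Module.finrank_pos_iff (R := K) (M := V)]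
      omega
    -- the fixed subspace
    set F : Submodule K V :=
      ⨅ u : G, LinearMap.ker (((u : (Module.End K V)ˣ) : Module.End K V) - 1) with hFdef
    have hmemF : ∀ v : V, v ∈ F ↔ ∀ u : G,
        ((u : (Module.End K V)ˣ) : Module.End K V) v = v := by
      intro v
      rw [hFdef, Submodule.mem_iInf]
      constructor
      · intro h u
        have := h u
        rw [LinearMap.mem_ker, LinearMap.sub_apply, Module.End.one_apply, sub_eq_zero] at this
        exact this
      · intro h u
        rw [LinearMap.mem_ker, LinearMap.sub_apply, Module.End.one_apply, sub_eq_zero]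
        exact h u
    have hFbot : F ≠ ⊥ := by
      obtain ⟨v, hv0, hvfix⟩ := kolchin_fixed (k + 1) (le_of_eq hrank) inferInstance G hG
      intro hF
      apply hv0
      have : v ∈ F := (hmemF v).mpr fun u => hvfix u u.2
      rwa [hF, Submodule.mem_bot] at this
    have hFrank : 0 < finrank K F := by
      rcases Nat.eq_zero_or_pos (finrank K F) with h | h
      · exact absurd (Submodule.finrank_eq_zero.mp h) hFbot
      · exact h
    have hQrank : finrank K (V ⧸ F) ≤ k := by
      have := Submodule.finrank_quotient_add_finrank F
      omega
    obtain ⟨m', rfl⟩ : ∃ m', m = m' + 1 := ⟨m - 1, by omega⟩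
    -- quotient action
    have hle2 : ∀ u : G, F ≤ F.comap ((u : (Module.End K V)ˣ) : Module.End K V) := by
      intro u v hv
      rw [Submodule.mem_comap, (hmemF v).mp hv u]
      exact hv
    let q : (u : G) → Module.End K (V ⧸ F) := fun u =>
      Submodule.mapQ F F ((u : (Module.End K V)ˣ) : Module.End K V) (hle2 u)
    have hqmk : ∀ (u : G) (x : V), q u (Submodule.Quotient.mk x)
        = Submodule.Quotient.mk (((u : (Module.End K V)ˣ) : Module.End K V) x) :=
      fun u x => rfl
    have hq1 : ∀ u : G, q u * q u⁻¹ = 1 := by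
      intro u
      refine Submodule.linearMap_qext F ?_
      ext x
      show q u (q u⁻¹ (Submodule.Quotient.mk x)) = Submodule.Quotient.mk x
      rw [hqmk, hqmk]
      congr 1
      have h5 : ((u : (Module.End K V)ˣ) : Module.End K V) *
          (((u⁻¹ : G) : (Module.End K V)ˣ) : Module.End K V) = 1 := by
        rw [show ((u⁻¹ : G) : (Module.End K V)ˣ) = ((u : (Module.End K V)ˣ))⁻¹ from rfl,
          ← Units.val_mul, mul_inv_cancel, Units.val_one]
      exact LinearMap.congr_fun h5 x
    let ρ : G →* (Module.End K (V ⧸ F))ˣ :=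
      { toFun := fun u =>
          { val := q u
            inv := q u⁻¹
            val_inv := hq1 u
            inv_val := by have := hq1 u⁻¹; rwa [inv_inv] at this }
        map_one' := by
          apply Units.ext
          show q 1 = (1 : Module.End K (V ⧸ F))
          refine Submodule.linearMap_qext F ?_
          ext x
          show q 1 (Submodule.Quotient.mk x) = Submodule.Quotient.mk x
          rw [hqmk]
          rfl
        map_mul' := fun u₁ u₂ => by
          apply Units.ext
          show q (u₁ * u₂) = q u₁ * q u₂
          refine Submodule.linearMap_qext F ?_
          ext x
          show q (u₁ * u₂) (Submodule.Quotient.mk x)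
            = q u₁ (q u₂ (Submodule.Quotient.mk x))
          rw [hqmk, hqmk, hqmk]
          rfl }
    have hG' : ∀ u' ∈ ρ.range, IsNilpotent ((u' : Module.End K (V ⧸ F)) - 1) := by
      rintro u' ⟨u, rfl⟩
      obtain ⟨j, hj⟩ := hG u u.2
      refine ⟨j, ?_⟩
      have hle3 : F ≤ F.comap (((u : (Module.End K V)ˣ) : Module.End K V) - 1) := by
        intro v hv
        rw [Submodule.mem_comap, LinearMap.sub_apply, Module.End.one_apply,
          (hmemF v).mp hv u, sub_self]
        exact F.zero_mem
      have hsub : (ρ u : Module.End K (V ⧸ F)) - 1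
          = Submodule.mapQ F F (((u : (Module.End K V)ˣ) : Module.End K V) - 1) hle3 := by
        refine Submodule.linearMap_qext F ?_
        ext x
        simp [q, ρ, Submodule.mapQ_apply]
      rw [hsub, ← Submodule.mapQ_pow]
      refine Submodule.linearMap_qext F ?_
      ext x
      show Submodule.mapQ F F ((((u : (Module.End K V)ˣ) : Module.End K V) - 1) ^ j)
          (F.le_comap_pow_of_le_comap hle3 j) (Submodule.Quotient.mk x) = 0
      rw [Submodule.mapQ_apply, hj]
      simp
    -- apply the inductive hypothesis on the quotient
    let gs' : Fin m' → ρ.range := fun i => ⟨ρ (gs i.succ), ⟨gs i.succ, rfl⟩⟩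
    let hs' : Fin m' → ρ.range := fun i => ⟨ρ (hs i.succ), ⟨hs i.succ, rfl⟩⟩
    have hm' : finrank K (V ⧸ F) ≤ m' := by omega
    have hprodQ := ih hQrank ρ.range hG' m' hm' gs' hs'
    -- commutation
    set f : Fin m' → Module.End K V := fun i =>
      ((hs i.succ : (Module.End K V)ˣ) : Module.End K V) *
        (1 - ((gs i.succ : (Module.End K V)ˣ) : Module.End K V)) with hfdef
    set fq : Fin m' → Module.End K (V ⧸ F) := fun i =>
      ((hs' i : (Module.End K (V ⧸ F))ˣ) : Module.End K (V ⧸ F)) *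
        (1 - ((gs' i : (Module.End K (V ⧸ F))ˣ) : Module.End K (V ⧸ F))) with hfqdef
    have hcommi : ∀ i, fq i ∘ₗ F.mkQ = F.mkQ ∘ₗ f i := by
      intro i
      ext x
      show (q (hs i.succ)) ((1 - q (gs i.succ)) (Submodule.Quotient.mk x))
          = Submodule.Quotient.mk (f i x)
      rw [LinearMap.sub_apply, Module.End.one_apply, hqmk, ← Submodule.Quotient.mk_sub, hqmk]
      rfl
    have hcomm := prod_comm_quot F.mkQ m' f fq hcommi
    rw [hprodQ] at hcomm
    have hrange : ∀ x : V, (List.ofFn f).prod x ∈ F := by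
      intro x
      have : F.mkQ ((List.ofFn f).prod x) = 0 := by
        rw [← LinearMap.comp_apply, ← hcomm]
        rfl
      rwa [← Submodule.Quotient.mk_eq_zero F]
    -- assemble
    rw [List.ofFn_succ, List.prod_cons]
    refine LinearMap.ext fun x => ?_
    rw [Module.End.mul_apply]
    have hx : (List.ofFn fun i : Fin m' =>
        ((hs i.succ : (Module.End K V)ˣ) : Module.End K V) *
          (1 - ((gs i.succ : (Module.End K V)ˣ) : Module.End K V))).prod x ∈ F := hrange x
    set y := (List.ofFn fun i : Fin m' =>
        ((hs i.succ : (Module.End K V)ˣ) : Module.End K V) *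
          (1 - ((gs i.succ : (Module.End K V)ˣ) : Module.End K V))).prod x with hydef
    rw [Module.End.mul_apply, LinearMap.sub_apply, Module.End.one_apply,
      (hmemF y).mp hx (gs 0), sub_self, map_zero, LinearMap.zero_apply]

end Main

end UnipotentKolchinAux

/-- Let `V` be an `n`-dimensional vector space and `G ≤ GL(V)` a subgroup all of whose
elements are unipotent.  For any `g₁,…,g_m, h₁,…,h_m ∈ G` with `m ≥ n`, the composition
`h₁(Id − g₁) ⋯ h_m(Id − g_m)` is zero. -/
theorem unipotent_long_product_eq_zero
    {K V : Type*} [Field K] [AddCommGroup V] [Module K V] [FiniteDimensional K V]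
    (n : ℕ) (hn : Module.finrank K V = n)
    (G : Subgroup (Module.End K V)ˣ)
    (hG : ∀ u ∈ G, ((u : Module.End K V) - 1) ^ n = 0)
    (m : ℕ) (hm : n ≤ m) (gs hs : Fin m → G) :
    (List.ofFn fun i => ((hs i : (Module.End K V)ˣ) : Module.End K V) *
        (1 - ((gs i : (Module.End K V)ˣ) : Module.End K V))).prod = 0 := by
  classical
  let L := AlgebraicClosure K
  let φ : Module.End K V →ₐ[K] Module.End L (L ⊗[K] V) :=
    Module.End.baseChangeHom (R := K) (A := L) (M := V)
  have hφapp : ∀ (f : Module.End K V) (c : L) (v : V),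
      φ f (c ⊗ₜ[K] v) = c ⊗ₜ[K] (f v) := fun f c v => rfl
  -- injectivity of φ
  have hker : ∀ f : Module.End K V, φ f = 0 → f = 0 := by
    intro f hf
    obtain ⟨ξ, hξ⟩ : ∃ ξ : L →ₗ[K] K, ξ 1 = 1 := by
      obtain ⟨φ₀, hφ₀⟩ : ∃ φ₀ : Module.Dual K L, φ₀ 1 ≠ 0 := by
        by_contra hcon
        push_neg at hcon
        exact one_ne_zero ((Module.forall_dual_apply_eq_zero_iff K (1 : L)).mp hcon)
      refine ⟨(φ₀ 1)⁻¹ • φ₀, ?_⟩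
      simp [inv_mul_cancel₀ hφ₀]
    refine LinearMap.ext fun v => ?_
    have h2 : (0 : L ⊗[K] V) = (1 : L) ⊗ₜ[K] (f v) := by
      rw [← hφapp f 1 v, hf]
      rfl
    have h3 := congrArg (fun z => (TensorProduct.lid K V) ((LinearMap.rTensor V ξ) z)) h2
    simpa [LinearMap.rTensor_tmul, TensorProduct.lid_tmul, hξ] using h3.symm
  -- transported group
  let ψ : (Module.End K V)ˣ →* (Module.End L (L ⊗[K] V))ˣ :=
    Units.map (φ : Module.End K V →* Module.End L (L ⊗[K] V))
  let G' : Subgroup (Module.End L (L ⊗[K] V))ˣ := G.map ψ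
  have hrank : Module.finrank L (L ⊗[K] V) = n := by
    rw [Module.finrank_baseChange, hn]
  have hG' : ∀ u' ∈ G', IsNilpotent ((u' : Module.End L (L ⊗[K] V)) - 1) := by
    rintro u' hu'
    obtain ⟨u, hu, rfl⟩ := hu'
    refine ⟨n, ?_⟩
    have h4 : ((ψ u : (Module.End L (L ⊗[K] V))ˣ) : Module.End L (L ⊗[K] V))
        = φ ((u : Module.End K V)) := rfl
    rw [h4, ← map_one φ, ← map_sub φ, ← map_pow, hG u hu, map_zero]
  let gs' : Fin m → G' := fun i => ⟨ψ (gs i), Subgroup.mem_map_of_mem ψ (gs i).2⟩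
  let hs' : Fin m → G' := fun i => ⟨ψ (hs i), Subgroup.mem_map_of_mem ψ (hs i).2⟩
  have hmain := UnipotentKolchinAux.main_alg_closed (K := L) n (le_of_eq hrank) G' hG'
    m (hrank ▸ hm) gs' hs'
  have hlist : (List.ofFn fun i => ((hs' i : (Module.End L (L ⊗[K] V))ˣ) :
        Module.End L (L ⊗[K] V)) * (1 - ((gs' i : (Module.End L (L ⊗[K] V))ˣ) :
        Module.End L (L ⊗[K] V))))
      = List.map φ (List.ofFn fun i => ((hs i : (Module.End K V)ˣ) : Module.End K V) *
        (1 - ((gs i : (Module.End K V)ˣ) : Module.End K V))) := by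
    rw [List.map_ofFn]
    congr 1
    funext i
    rw [Function.comp_apply, map_mul, map_sub, map_one]
    rfl
  apply hker
  rw [map_list_prod, ← hlist]
  exact hmain
end

section
/- Let U be a group of strictly upper-triangular unipotent n × n matrices over ℤ acting linearly on ℤⁿ, let T' ⊆ T be U-stable subgroups with T abelian, and consider the semidirect product G = U ⋉ T' with U acting on T' via the linear action. If for every g₁,…,g_k, h₁,…,h_k ∈ U with k ≥ d the composite endomorphism h₁(Id − g₁)⋯h_k(Id − g_k) annihilates T', and Γ_{n−1}U = 1, then Γ_{max(n−1, d)}G = 1. -/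
section Aux

variable (U : Type*) [Group U] (T : Type*) [AddCommGroup T] [DistribMulAction U T]

local notation "ρ" => DistribMulAction.toAddMonoidEnd U T

/-- The additive span of products `h₁(1-g₁) ⋯ h_k(1-g_k)` of length `k`. -/
def Sgrp (k : ℕ) : AddSubgroup (AddMonoid.End T) :=
  AddSubgroup.closure {f | ∃ L : List (U × U), L.length = k ∧
    f = (L.map fun p => ρ p.2 * (1 - ρ p.1)).prod}

variable {U T}

theorem mem_Sgrp_of_list (L : List (U × U)) :
    ((L.map fun p => ρ p.2 * (1 - ρ p.1)).prod) ∈ Sgrp U T L.length :=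
  AddSubgroup.subset_closure ⟨L, rfl, rfl⟩

theorem Sgrp_mul {j k : ℕ} {f g : AddMonoid.End T} (hf : f ∈ Sgrp U T j)
    (hg : g ∈ Sgrp U T k) : f * g ∈ Sgrp U T (j + k) := by
  induction hf using AddSubgroup.closure_induction with
  | mem x hx =>
    induction hg using AddSubgroup.closure_induction with
    | mem y hy =>
      obtain ⟨L1, rfl, rfl⟩ := hx
      obtain ⟨L2, rfl, rfl⟩ := hy
      have := mem_Sgrp_of_list (T := T) (L1 ++ L2)
      simpa using this
    | zero => simpa using zero_mem _
    | add y z hy hz ihy ihz => rw [mul_add]; exact add_mem ihy ihz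
    | neg y hy ih => rw [mul_neg]; exact neg_mem ih
  | zero => simpa using zero_mem _
  | add x y hx hy ihx ihy => rw [add_mul]; exact add_mem ihx ihy
  | neg x hx ih => rw [neg_mul]; exact neg_mem ih

theorem Sgrp_rho_mul {k : ℕ} (u : U) {f : AddMonoid.End T} (hf : f ∈ Sgrp U T (k + 1)) :
    ρ u * f ∈ Sgrp U T (k + 1) := by
  induction hf using AddSubgroup.closure_induction with
  | mem x hx =>
    obtain ⟨L, hL, rfl⟩ := hx
    cases L with
    | nil => simp at hL
    | cons p L' =>
      have h1 : ρ u * ((p :: L').map fun q => ρ q.2 * (1 - ρ q.1)).prod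
          = (((p.1, u * p.2) :: L').map fun q => ρ q.2 * (1 - ρ q.1)).prod := by
        simp only [List.map_cons, List.prod_cons, map_mul, mul_assoc]
      rw [h1]
      have := mem_Sgrp_of_list (T := T) ((p.1, u * p.2) :: L')
      simpa [← hL] using this
  | zero => rw [mul_zero]; exact zero_mem _
  | add x y hx hy ihx ihy => rw [mul_add]; exact add_mem ihx ihy
  | neg x hx ih => rw [mul_neg]; exact neg_mem ih

theorem factor_mul_rho (u : U) (p : U × U) :
    (ρ p.2 * (1 - ρ p.1)) * ρ u
      = ρ u * (ρ (u⁻¹ * p.2 * u) * (1 - ρ (u⁻¹ * p.1 * u))) := by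
  simp only [mul_sub, sub_mul, mul_one, one_mul, ← map_mul, mul_assoc,
    mul_inv_cancel_left, inv_mul_cancel_left]

theorem prod_mul_rho (u : U) (L : List (U × U)) :
    (L.map fun p => ρ p.2 * (1 - ρ p.1)).prod * ρ u
      = ρ u * ((L.map fun p => ((u⁻¹ * p.1 * u : U), (u⁻¹ * p.2 * u : U))).map
          fun p => ρ p.2 * (1 - ρ p.1)).prod := by
  induction L with
  | nil => simp; exact AddMonoidHom.ext fun _ => rfl
  | cons p L ih =>
    simp only [List.map_cons, List.prod_cons]
    calc (ρ p.2 * (1 - ρ p.1)) * (L.map fun q => ρ q.2 * (1 - ρ q.1)).prod * ρ u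
        = (ρ p.2 * (1 - ρ p.1)) * ((L.map fun q => ρ q.2 * (1 - ρ q.1)).prod * ρ u) := by
          rw [mul_assoc]
      _ = ((ρ p.2 * (1 - ρ p.1)) * ρ u) * ((L.map fun q => ((u⁻¹ * q.1 * u : U), (u⁻¹ * q.2 * u : U))).map
            fun q => ρ q.2 * (1 - ρ q.1)).prod := by rw [ih, ← mul_assoc]
      _ = _ := by rw [factor_mul_rho]; rw [mul_assoc]

theorem Sgrp_mul_rho {k : ℕ} (u : U) {f : AddMonoid.End T} (hf : f ∈ Sgrp U T (k + 1)) :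
    f * ρ u ∈ Sgrp U T (k + 1) := by
  induction hf using AddSubgroup.closure_induction with
  | mem x hx =>
    obtain ⟨L, hL, rfl⟩ := hx
    rw [prod_mul_rho]
    apply Sgrp_rho_mul
    have := mem_Sgrp_of_list (T := T)
      (L.map fun p => ((u⁻¹ * p.1 * u : U), (u⁻¹ * p.2 * u : U)))
    simpa [hL] using this
  | zero => rw [zero_mul]; exact zero_mem _
  | add x y hx hy ihx ihy => rw [add_mul]; exact add_mem ihx ihy
  | neg x hx ih => rw [neg_mul]; exact neg_mem ih

end Aux
section Aux2
variable {U : Type*} [Group U] {T : Type*} [AddCommGroup T] [DistribMulAction U T]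

local notation "ρ" => DistribMulAction.toAddMonoidEnd U T

theorem one_sub_rho_mem_one (u : U) : (1 : AddMonoid.End T) - ρ u ∈ Sgrp U T 1 := by
  have := mem_Sgrp_of_list (T := T) [((u : U), (1 : U))]
  simpa only [List.map_cons, List.map_nil, List.prod_cons, List.prod_nil, map_one, one_mul,
    mul_one, List.length_cons, List.length_nil] using this

theorem Sgrp_succ_le {k : ℕ} {f : AddMonoid.End T} (hf : f ∈ Sgrp U T (k + 2)) :
    f ∈ Sgrp U T (k + 1) := by
  induction hf using AddSubgroup.closure_induction with
  | mem x hx =>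
    obtain ⟨L, hL, rfl⟩ := hx
    cases L with
    | nil => simp at hL
    | cons p L' =>
      have hL' : L'.length = k + 1 := by simpa using hL
      have hrest : ((L'.map fun q => ρ q.2 * (1 - ρ q.1)).prod) ∈ Sgrp U T (k + 1) := by
        have := mem_Sgrp_of_list (T := T) L'
        rwa [hL'] at this
      have h1 : (((p :: L').map fun q => ρ q.2 * (1 - ρ q.1)).prod)
          = ρ p.2 * ((L'.map fun q => ρ q.2 * (1 - ρ q.1)).prod)
            - ρ p.2 * (ρ p.1 * ((L'.map fun q => ρ q.2 * (1 - ρ q.1)).prod)) := by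
        simp only [List.map_cons, List.prod_cons, sub_mul, one_mul, mul_assoc, mul_sub]
      rw [h1]
      exact sub_mem (Sgrp_rho_mul _ hrest) (Sgrp_rho_mul _ (Sgrp_rho_mul _ hrest))
  | zero => exact zero_mem _
  | add x y hx hy ihx ihy => exact add_mem ihx ihy
  | neg x hx ih => exact neg_mem ih

theorem one_sub_rho_mem (k : ℕ) (u : U) (hu : u ∈ (⊤ : Subgroup U).lowerCentralSeries k) :
    (1 : AddMonoid.End T) - ρ u ∈ Sgrp U T (k + 1) := by
  induction k generalizing u with
  | zero => exact one_sub_rho_mem_one u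
  | succ k ih =>
    rw [Subgroup.mem_lowerCentralSeries_succ_iff] at hu
    induction hu using Subgroup.closure_induction with
    | mem x hx =>
      obtain ⟨a, ha, b, -, rfl⟩ := hx
      rw [commutatorElement_def]
      have h1 : (1 : AddMonoid.End T) - ρ a ∈ Sgrp U T (k + 1) := ih a ha
      have h2 : (1 : AddMonoid.End T) - ρ b ∈ Sgrp U T 1 := one_sub_rho_mem_one b
      have key : (1 : AddMonoid.End T) - ρ (a * b * a⁻¹ * b⁻¹)
          = (((1 - ρ b) * (1 - ρ a) - (1 - ρ a) * (1 - ρ b)) * ρ a⁻¹) * ρ b⁻¹ := by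
        simp only [sub_mul, mul_sub, one_mul, mul_one, ← map_mul,
          mul_assoc, mul_inv_cancel, mul_inv_cancel_left, inv_mul_cancel_left, map_one]
        abel
      rw [key]
      have hba : ((1 : AddMonoid.End T) - ρ b) * (1 - ρ a) ∈ Sgrp U T (k + 2) := by
        have := Sgrp_mul h2 h1
        rwa [show 1 + (k + 1) = k + 2 by omega] at this
      have hab : ((1 : AddMonoid.End T) - ρ a) * (1 - ρ b) ∈ Sgrp U T (k + 2) :=
        Sgrp_mul (j := k + 1) (k := 1) h1 h2
      exact Sgrp_mul_rho _ (Sgrp_mul_rho _ (sub_mem hba hab))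
    | one => simp only [map_one, sub_self]; exact zero_mem _
    | mul x y hx hy ihx ihy =>
      have key : (1 : AddMonoid.End T) - ρ (x * y)
          = (1 - ρ x) + ρ x * (1 - ρ y) := by
        simp only [map_mul, mul_sub, mul_one]; abel
      rw [key]
      exact add_mem ihx (Sgrp_rho_mul _ ihy)
    | inv x hx ihx =>
      have key : (1 : AddMonoid.End T) - ρ x⁻¹ = -(ρ x⁻¹ * (1 - ρ x)) := by
        simp only [mul_sub, mul_one, ← map_mul, inv_mul_cancel, map_one]; abel
      rw [key]
      exact neg_mem (Sgrp_rho_mul _ ihx)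

end Aux2
section Aux3
variable {U : Type*} [Group U] {T : Type*} [AddCommGroup T] [DistribMulAction U T]

local notation "ρ" => DistribMulAction.toAddMonoidEnd U T

/-- The additive subgroup of `T` spanned by values `f b` with `f ∈ Sgrp U T k`, `b ∈ T'`. -/
def Mgrp (U : Type*) [Group U] {T : Type*} [AddCommGroup T] [DistribMulAction U T]
    (T' : AddSubgroup T) (k : ℕ) : AddSubgroup T :=
  AddSubgroup.closure {t | ∃ f ∈ Sgrp U T k, ∃ b ∈ T', t = f b}

variable {T' : AddSubgroup T}

theorem mem_Mgrp_gen {k : ℕ} {f : AddMonoid.End T} (hf : f ∈ Sgrp U T k) {b : T}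
    (hb : b ∈ T') : f b ∈ Mgrp U T' k := by
  induction hf using AddSubgroup.closure_induction with
  | mem x hx => exact AddSubgroup.subset_closure ⟨x, AddSubgroup.subset_closure hx, b, hb, rfl⟩
  | zero =>
    show (0 : AddMonoid.End T) b ∈ _
    rw [AddMonoid.End.zero_apply]
    exact zero_mem _
  | add x y hx hy ihx ihy =>
    show (x + y) b ∈ _
    rw [show (x + y) b = x b + y b from rfl]
    exact add_mem ihx ihy
  | neg x hx ih =>
    show (-x) b ∈ _
    rw [show (-x) b = -(x b) from rfl]
    exact neg_mem ih

theorem Mgrp_apply {j k : ℕ} {f : AddMonoid.End T} (hf : f ∈ Sgrp U T j) {t : T}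
    (ht : t ∈ Mgrp U T' k) : f t ∈ Mgrp U T' (j + k) := by
  induction ht using AddSubgroup.closure_induction with
  | mem x hx =>
    obtain ⟨g, hg, b, hb, rfl⟩ := hx
    have : f (g b) = (f * g) b := rfl
    rw [this]
    exact mem_Mgrp_gen (Sgrp_mul hf hg) hb
  | zero => rw [map_zero]; exact zero_mem _
  | add x y hx hy ihx ihy => rw [map_add]; exact add_mem ihx ihy
  | neg x hx ih => rw [map_neg]; exact neg_mem ih

theorem Mgrp_zero_eq : Mgrp U T' 0 = T' := by
  apply le_antisymm
  · refine (AddSubgroup.closure_le _).2 ?_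
    rintro t ⟨f, hf, b, hb, rfl⟩
    induction hf using AddSubgroup.closure_induction with
    | mem x hx =>
      obtain ⟨L, hL, rfl⟩ := hx
      cases L with
      | nil => simpa using hb
      | cons p L' => simp at hL
    | zero =>
      show (0 : AddMonoid.End T) b ∈ _
      rw [AddMonoid.End.zero_apply]; exact zero_mem _
    | add x y hx hy ihx ihy =>
      show (x + y) b ∈ _
      rw [show (x + y) b = x b + y b from rfl]; exact add_mem ihx ihy
    | neg x hx ih =>
      show (-x) b ∈ _
      rw [show (-x) b = -(x b) from rfl]; exact neg_mem ih
  · intro b hb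
    have h1 : (1 : AddMonoid.End T) ∈ Sgrp U T 0 := by
      have := mem_Sgrp_of_list (T := T) (U := U) []
      simpa using this
    have : b = (1 : AddMonoid.End T) b := rfl
    rw [this]
    exact mem_Mgrp_gen h1 hb

theorem Mgrp_smul (hst : ∀ (u : U), ∀ t ∈ T', u • t ∈ T') (u : U) {k : ℕ} {t : T}
    (ht : t ∈ Mgrp U T' k) : u • t ∈ Mgrp U T' k := by
  cases k with
  | zero =>
    rw [Mgrp_zero_eq] at ht ⊢
    exact hst u t ht
  | succ k =>
    induction ht using AddSubgroup.closure_induction with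
    | mem x hx =>
      obtain ⟨f, hf, b, hb, rfl⟩ := hx
      have : u • f b = (ρ u * f) b := rfl
      rw [this]
      exact mem_Mgrp_gen (Sgrp_rho_mul u hf) hb
    | zero => rw [smul_zero]; exact zero_mem _
    | add x y hx hy ihx ihy => rw [smul_add]; exact add_mem ihx ihy
    | neg x hx ih => rw [smul_neg]; exact neg_mem ih

theorem Mgrp_succ_le {k : ℕ} : Mgrp U T' (k + 2) ≤ Mgrp U T' (k + 1) := by
  refine (AddSubgroup.closure_le _).2 ?_
  rintro t ⟨f, hf, b, hb, rfl⟩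
  exact mem_Mgrp_gen (Sgrp_succ_le hf) hb

end Aux3
/-- The action of `U` on a `U`-stable additive subgroup `T' ≤ T`, as multiplicative
automorphisms of `Multiplicative T'`. -/
def AddSubgroup.stableMulAut {U T : Type*} [Group U] [AddCommGroup T]
    [DistribMulAction U T] (T' : AddSubgroup T)
    (hst : ∀ (u : U), ∀ t ∈ T', u • t ∈ T') :
    U →* MulAut (Multiplicative T') where
  toFun u := AddEquiv.toMultiplicative
    { toFun := fun t => ⟨u • (t : T), hst u t t.2⟩
      invFun := fun t => ⟨u⁻¹ • (t : T), hst u⁻¹ t t.2⟩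
      left_inv := fun t => by ext; simp
      right_inv := fun t => by ext; simp
      map_add' := fun a b => by ext; simp }
  map_one' := by ext t; simp [AddEquiv.toMultiplicative]
  map_mul' u v := by ext t; simp [AddEquiv.toMultiplicative, mul_smul]

section Aux4

variable {U : Type*} [Group U] {T : Type*} [AddCommGroup T] [DistribMulAction U T]
  (T' : AddSubgroup T) (hst : ∀ (u : U), ∀ t ∈ T', u • t ∈ T')

local notation "ρ" => DistribMulAction.toAddMonoidEnd U T

theorem stableMulAut_coe (u : U) (x : Multiplicative T') :
    ((Multiplicative.toAdd ((T'.stableMulAut hst) u x) : T') : T)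
      = u • ((Multiplicative.toAdd x : T') : T) := rfl

theorem comm_left_eq (a b : Multiplicative T' ⋊[T'.stableMulAut hst] U) :
    ((Multiplicative.toAdd (a * b * a⁻¹ * b⁻¹).left : T') : T)
      = ((Multiplicative.toAdd a.left : T') : T)
        + a.right • ((Multiplicative.toAdd b.left : T') : T)
        + (- (a.right • b.right • a.right⁻¹ • ((Multiplicative.toAdd a.left : T') : T)))
        + (- (a.right • b.right • a.right⁻¹ • b.right⁻¹ •
            ((Multiplicative.toAdd b.left : T') : T))) := by
  simp only [SemidirectProduct.mul_left, SemidirectProduct.mul_right,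
    SemidirectProduct.inv_left, SemidirectProduct.inv_right, map_mul, MulAut.mul_apply,
    toAdd_mul, toAdd_inv, AddSubgroup.coe_add, AddSubgroup.coe_neg, stableMulAut_coe,
    smul_neg, smul_add]

theorem claimB (k : ℕ) :
    ∀ g ∈ (⊤ : Subgroup (Multiplicative T' ⋊[T'.stableMulAut hst] U)).lowerCentralSeries k,
      ((Multiplicative.toAdd g.left : T') : T) ∈ Mgrp U T' k := by
  induction k with
  | zero =>
    intro g _
    rw [Mgrp_zero_eq]
    exact (Multiplicative.toAdd g.left).2
  | succ k ih =>
    intro g hg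
    rw [Subgroup.mem_lowerCentralSeries_succ_iff] at hg
    induction hg using Subgroup.closure_induction with
    | mem x hx =>
      obtain ⟨a, ha, b, -, rfl⟩ := hx
      rw [commutatorElement_def]
      have hbM : ((Multiplicative.toAdd a.left : T') : T) ∈ Mgrp U T' k := ih a ha
      have huU : a.right ∈ (⊤ : Subgroup U).lowerCentralSeries k := by
        refine Subgroup.lowerCentralSeries.map
          (SemidirectProduct.rightHom (φ := T'.stableMulAut hst)) k ?_
        exact ⟨a, ha, rfl⟩
      set u := a.right with hu
      set u' := b.right with hu'
      set ta := ((Multiplicative.toAdd a.left : T') : T) with hta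
      set tb := ((Multiplicative.toAdd b.left : T') : T) with htb
      rw [comm_left_eq]
      have htbT : tb ∈ T' := (Multiplicative.toAdd b.left).2
      have hX : ta + (- (u • u' • u⁻¹ • ta))
          = ((1 : AddMonoid.End T) - ρ (u * u' * u⁻¹)) ta := by
        rw [show ((1 : AddMonoid.End T) - ρ (u * u' * u⁻¹)) ta = (1 : AddMonoid.End T) ta - ρ (u * u' * u⁻¹) ta from rfl, AddMonoid.End.one_apply,
          show ρ (u * u' * u⁻¹) ta = (u * u' * u⁻¹) • ta from rfl,
          mul_smul, mul_smul, sub_eq_add_neg]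
      have hY : u • tb + (- (u • u' • u⁻¹ • u'⁻¹ • tb))
          = (ρ u * ((1 : AddMonoid.End T) - ρ (u' * u⁻¹ * u'⁻¹))) tb := by
        have hmul : ∀ (f g : AddMonoid.End T) (x : T), (f * g) x = f (g x) := fun _ _ _ => rfl
        rw [hmul, show ((1 : AddMonoid.End T) - ρ (u' * u⁻¹ * u'⁻¹)) tb = (1 : AddMonoid.End T) tb - ρ (u' * u⁻¹ * u'⁻¹) tb from rfl, AddMonoid.End.one_apply,
          show ρ u (tb - ρ (u' * u⁻¹ * u'⁻¹) tb) = u • (tb - (u' * u⁻¹ * u'⁻¹) • tb) from rfl,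
          smul_sub, mul_smul, mul_smul, sub_eq_add_neg]
      have hre : ta + u • tb + (- (u • u' • u⁻¹ • ta)) + (- (u • u' • u⁻¹ • u'⁻¹ • tb))
          = (ta + (- (u • u' • u⁻¹ • ta))) + (u • tb + (- (u • u' • u⁻¹ • u'⁻¹ • tb))) := by
        abel
      rw [hre, hX, hY]
      refine add_mem ?_ ?_
      · have h1 := Mgrp_apply (T' := T') (one_sub_rho_mem_one (u * u' * u⁻¹)) hbM
        rwa [show 1 + k = k + 1 by omega] at h1
      · have hc : u' * u⁻¹ * u'⁻¹ * u ∈ (⊤ : Subgroup U).lowerCentralSeries (k + 1) := by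
          rw [Subgroup.mem_lowerCentralSeries_succ_iff]
          have h2 : u⁻¹ * u' * u * u'⁻¹ ∈ Subgroup.closure
              {x | ∃ p ∈ (⊤ : Subgroup U).lowerCentralSeries k, ∃ q ∈ (⊤ : Subgroup U),
                p * q * p⁻¹ * q⁻¹ = x} := by
            refine Subgroup.subset_closure ⟨u⁻¹, inv_mem huU, u', trivial, ?_⟩
            group
          have h3 := inv_mem h2
          have h4 : (u⁻¹ * u' * u * u'⁻¹)⁻¹ = u' * u⁻¹ * u'⁻¹ * u := by group
          rwa [h4] at h3
        have h5 : (1 : AddMonoid.End T) - ρ (u' * u⁻¹ * u'⁻¹ * u) ∈ Sgrp U T (k + 2) :=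
          one_sub_rho_mem (k + 1) _ hc
        have h6 : (1 : AddMonoid.End T) - ρ u ∈ Sgrp U T (k + 1) :=
          one_sub_rho_mem k u huU
        have h7 : (1 : AddMonoid.End T) - ρ u⁻¹ ∈ Sgrp U T (k + 1) := by
          have key : (1 : AddMonoid.End T) - ρ u⁻¹ = -(ρ u⁻¹ * (1 - ρ u)) := by
            simp only [mul_sub, mul_one, ← map_mul, inv_mul_cancel, map_one]; abel
          rw [key]
          exact neg_mem (Sgrp_rho_mul _ h6)
        have h8 : (1 : AddMonoid.End T) - ρ (u' * u⁻¹ * u'⁻¹) ∈ Sgrp U T (k + 1) := by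
          have key : (1 : AddMonoid.End T) - ρ (u' * u⁻¹ * u'⁻¹)
              = (1 - ρ ((u' * u⁻¹ * u'⁻¹ * u) * u⁻¹)) := by group
          rw [key]
          have key2 : (1 : AddMonoid.End T) - ρ ((u' * u⁻¹ * u'⁻¹ * u) * u⁻¹)
              = (1 - ρ (u' * u⁻¹ * u'⁻¹ * u))
                + ρ (u' * u⁻¹ * u'⁻¹ * u) * (1 - ρ u⁻¹) := by
            simp only [map_mul, mul_sub, mul_one]; abel
          rw [key2]
          exact add_mem (Sgrp_succ_le h5) (Sgrp_rho_mul _ h7)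
        exact mem_Mgrp_gen (Sgrp_rho_mul u h8) htbT
    | one =>
      simp only [SemidirectProduct.one_left, toAdd_one, AddSubgroup.coe_zero]
      exact zero_mem _
    | mul x y hx hy ihx ihy =>
      simp only [SemidirectProduct.mul_left, toAdd_mul, AddSubgroup.coe_add, stableMulAut_coe]
      exact add_mem ihx (Mgrp_smul hst _ ihy)
    | inv x hx ihx =>
      simp only [SemidirectProduct.inv_left, stableMulAut_coe, toAdd_inv, AddSubgroup.coe_neg,
        smul_neg]
      exact neg_mem (Mgrp_smul hst _ ihx)

end Aux4
/-- Let `U` be a group of strictly upper-triangular unipotent `n × n` integer matrices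
acting linearly on `ℤⁿ`, let `T' ⊆ T` be `U`-stable subgroups with `T` abelian, and let
`G = U ⋉ T'`.  If every product `h₁(Id − g₁) ⋯ h_k(Id − g_k)` with `k ≥ d` annihilates
`T'` and `Γ_{n−1} U = 1`, then `Γ_{max(n−1, d)} G = 1`. -/
theorem semidirect_lowerCentralSeries_eq_bot
    (n d : ℕ) (U : Subgroup (Matrix (Fin n) (Fin n) ℤ)ˣ)
    (hupper : ∀ u ∈ U, ∀ i j : Fin n, j ≤ i →
      ((u : (Matrix (Fin n) (Fin n) ℤ)ˣ) : Matrix (Fin n) (Fin n) ℤ) i j =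
        if i = j then 1 else 0)
    {T : Type*} [AddCommGroup T] [DistribMulAction U T]
    (T' : AddSubgroup T) (hst : ∀ (u : U), ∀ t ∈ T', u • t ∈ T')
    (hann : ∀ k : ℕ, d ≤ k → ∀ gs hs : Fin k → U, ∀ b ∈ T',
      (List.ofFn fun i =>
        DistribMulAction.toAddMonoidEnd U T (hs i) *
          (1 - DistribMulAction.toAddMonoidEnd U T (gs i))).prod b = 0)
    (hU : (⊤ : Subgroup U).lowerCentralSeries (n - 1) = ⊥) :
    (⊤ : Subgroup (Multiplicative T' ⋊[T'.stableMulAut hst] U)).lowerCentralSeries (max (n - 1) d) = ⊥ := by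
  rw [eq_bot_iff]
  intro g hg
  rw [Subgroup.mem_bot]
  have hgr : g.right = 1 := by
    have h1 : g.right ∈ (⊤ : Subgroup U).lowerCentralSeries (max (n - 1) d) := by
      refine Subgroup.lowerCentralSeries.map
        (SemidirectProduct.rightHom (φ := T'.stableMulAut hst)) _ ?_
      exact ⟨g, hg, rfl⟩
    have h2 := Subgroup.lowerCentralSeries_antitone ⊤ (le_max_left (n - 1) d) h1
    rw [hU] at h2
    simpa using h2
  have hgl := claimB T' hst (max (n - 1) d) g hg
  have hM : ∀ t ∈ Mgrp ↥U T' (max (n - 1) d), t = 0 := by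
    intro t ht
    induction ht using AddSubgroup.closure_induction with
    | mem x hx =>
      obtain ⟨f, hf, b, hb, rfl⟩ := hx
      induction hf using AddSubgroup.closure_induction with
      | mem y hy =>
        obtain ⟨L, hL, rfl⟩ := hy
        have hd' : d ≤ L.length := by rw [hL]; exact le_max_right _ _
        have h3 := hann L.length hd' (fun i => (L[(i : ℕ)]).1) (fun i => (L[(i : ℕ)]).2) b hb
        have h4 : (List.ofFn fun i : Fin L.length =>
            DistribMulAction.toAddMonoidEnd ↥U T ((L[(i : ℕ)]).2) *
              (1 - DistribMulAction.toAddMonoidEnd ↥U T ((L[(i : ℕ)]).1)))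
            = L.map fun p => DistribMulAction.toAddMonoidEnd ↥U T p.2 *
              (1 - DistribMulAction.toAddMonoidEnd ↥U T p.1) :=
          List.ofFn_getElem_eq_map L (fun p =>
            DistribMulAction.toAddMonoidEnd ↥U T p.2 *
              (1 - DistribMulAction.toAddMonoidEnd ↥U T p.1))
        rwa [h4] at h3
      | zero =>
        show (0 : AddMonoid.End T) b = 0
        rw [AddMonoid.End.zero_apply]
      | add y z hy hz ihy ihz =>
        show (y + z) b = 0
        rw [show (y + z) b = y b + z b from rfl, ihy, ihz, add_zero]
      | neg y hy ihy =>
        show (-y) b = 0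
        rw [show (-y) b = -(y b) from rfl, ihy, neg_zero]
    | zero => rfl
    | add x y hx hy ihx ihy => rw [ihx, ihy, add_zero]
    | neg x hx ihx => rw [ihx, neg_zero]
  have h0 : Multiplicative.toAdd g.left = 0 := Subtype.ext (hM _ hgl)
  refine SemidirectProduct.ext ?_ hgr
  calc g.left = Multiplicative.ofAdd (Multiplicative.toAdd g.left) := rfl
    _ = Multiplicative.ofAdd 0 := by rw [h0]
    _ = 1 := rfl
end

section
/- Let T be an abelian group, U a group acting on T by automorphisms, and G = U ⋉ T the semidirect product. For every integer l ≥ 0 and every element (u, b) ∈ Γ_l G, the element b ∈ T is a finite sum of elements of the form ± h₁(Id − g₁) ⋯ h_k(Id − g_k)·b' for some k ≥ l, b' ∈ T, and g₁, …, g_k, h₁, …, h_k ∈ U. -/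
def DistribMulAction.toMulAutMultiplicative (U T : Type*) [Group U] [AddCommGroup T]
    [DistribMulAction U T] : U →* MulAut (Multiplicative T) where
  toFun u := AddEquiv.toMultiplicative (DistribMulAction.toAddAut U T u)
  map_one' := by ext t; simp [AddEquiv.toMultiplicative]
  map_mul' u v := by ext t; simp [AddEquiv.toMultiplicative, mul_smul]

namespace SemidirectLCS

section

variable (U T : Type*) [Group U] [AddCommGroup T] [DistribMulAction U T]

/-- The basic operator products `h₁(1-g₁)⋯h_k(1-g_k)`. -/
def P {k : ℕ} (gs hs : Fin k → U) : AddMonoid.End T :=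
  (List.ofFn fun i =>
    DistribMulAction.toAddMonoidEnd U T (hs i) *
      (1 - DistribMulAction.toAddMonoidEnd U T (gs i))).prod

def Ops (l : ℕ) : AddSubgroup (AddMonoid.End T) :=
  AddSubgroup.closure {p | ∃ k : ℕ, l ≤ k ∧ ∃ gs hs : Fin k → U, p = P U T gs hs}

def A (l : ℕ) : AddSubgroup T :=
  AddSubgroup.closure
    {t : T | ∃ k : ℕ, l ≤ k ∧ ∃ gs hs : Fin k → U, ∃ b' : T, t = P U T gs hs b'}

end

variable {U T : Type*} [Group U] [AddCommGroup T] [DistribMulAction U T]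

local notation "e" => DistribMulAction.toAddMonoidEnd U T

lemma P_append {k k' : ℕ} (gs hs : Fin k → U) (gs' hs' : Fin k' → U) :
    P U T (Fin.append gs gs') (Fin.append hs hs') = P U T gs hs * P U T gs' hs' := by
  unfold P
  rw [List.ofFn_add, List.prod_append]
  simp [Fin.append_left, Fin.append_right]

lemma P_mem_Ops {l k : ℕ} (h : l ≤ k) (gs hs : Fin k → U) : P U T gs hs ∈ Ops U T l :=
  AddSubgroup.subset_closure ⟨k, h, gs, hs, rfl⟩

lemma one_mem_Ops0 : (1 : AddMonoid.End T) ∈ Ops U T 0 := by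
  have : (1 : AddMonoid.End T) = P U T (k := 0) ![] ![] := by simp [P]
  rw [this]; exact P_mem_Ops (Nat.zero_le _) _ _

lemma P_single (g h : U) : P U T ![g] ![h] = e h * (1 - e g) := by
  simp [P]

lemma one_sub_mem (g : U) : (1 - e g) ∈ Ops U T 1 := by
  have : (1 : AddMonoid.End T) - e g = P U T ![g] ![1] := by
    rw [P_single, map_one, one_mul]
  rw [this]; exact P_mem_Ops le_rfl _ _

lemma Ops_mono {l m : ℕ} (h : l ≤ m) : Ops U T m ≤ Ops U T l :=
  AddSubgroup.closure_mono (fun p ⟨k, hk, gs, hs, hp⟩ => ⟨k, h.trans hk, gs, hs, hp⟩)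

lemma e_mem_Ops0 (g : U) : (e g) ∈ Ops U T 0 := by
  have : (e g : AddMonoid.End T) = 1 - (1 - e g) := (sub_sub_cancel 1 (e g)).symm
  rw [this]
  exact sub_mem one_mem_Ops0 (Ops_mono (Nat.zero_le 1) (one_sub_mem g))

lemma Ops_mul {l m : ℕ} {x y : AddMonoid.End T} (hx : x ∈ Ops U T l) (hy : y ∈ Ops U T m) :
    x * y ∈ Ops U T (l + m) := by
  induction hx using AddSubgroup.closure_induction with
  | mem p hp =>
    obtain ⟨k, hk, gs, hs, rfl⟩ := hp
    induction hy using AddSubgroup.closure_induction with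
    | mem q hq =>
      obtain ⟨k', hk', gs', hs', rfl⟩ := hq
      rw [← P_append]
      exact P_mem_Ops (Nat.add_le_add hk hk') _ _
    | zero => simpa using zero_mem _
    | add a b _ _ ha hb => rw [mul_add]; exact add_mem ha hb
    | neg a _ ha => rw [mul_neg]; exact neg_mem ha
  | zero => simpa using zero_mem _
  | add a b _ _ ha hb => rw [add_mul]; exact add_mem ha hb
  | neg a _ ha => rw [neg_mul]; exact neg_mem ha

lemma Ops_apply {l m : ℕ} {x : AddMonoid.End T} {t : T} (hx : x ∈ Ops U T l)
    (ht : t ∈ A U T m) : x t ∈ A U T (l + m) := by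
  induction hx using AddSubgroup.closure_induction with
  | mem p hp =>
    obtain ⟨k, hk, gs, hs, rfl⟩ := hp
    induction ht using AddSubgroup.closure_induction with
    | mem s hs' =>
      obtain ⟨k', hk', gs', hs', b', rfl⟩ := hs'
      have : P U T gs hs (P U T gs' hs' b') = P U T (Fin.append gs gs') (Fin.append hs hs') b' := by
        rw [P_append]; rfl
      rw [this]
      exact AddSubgroup.subset_closure ⟨k + k', Nat.add_le_add hk hk', _, _, b', rfl⟩
    | zero => simpa using zero_mem _
    | add a b _ _ ha hb => rw [map_add]; exact add_mem ha hb
    | neg a _ ha => rw [map_neg]; exact neg_mem ha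
  | zero => simpa using zero_mem _
  | add a b _ _ ha hb => exact add_mem ha hb
  | neg a _ ha => exact neg_mem ha

lemma mem_A0 (t : T) : t ∈ A U T 0 := by
  have : t = P U T (k := 0) ![] ![] t := by simp [P]
  exact AddSubgroup.subset_closure ⟨0, le_rfl, ![], ![], t, this⟩

lemma Ops_apply' {l : ℕ} {x : AddMonoid.End T} (hx : x ∈ Ops U T l) (t : T) :
    x t ∈ A U T l := by
  simpa using Ops_apply hx (mem_A0 t)

end SemidirectLCS

namespace SemidirectLCS

variable {U T : Type*} [Group U] [AddCommGroup T] [DistribMulAction U T]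

local notation "e" => DistribMulAction.toAddMonoidEnd U T

@[simp] lemma e_apply (g : U) (t : T) : e g t = g • t := rfl

@[simp] lemma toAdd_phi (u : U) (m : Multiplicative T) :
    Multiplicative.toAdd ((DistribMulAction.toMulAutMultiplicative U T u) m)
      = u • Multiplicative.toAdd m := rfl

@[simp] lemma phi_inv_apply (u : U) (m : Multiplicative T) :
    ((DistribMulAction.toMulAutMultiplicative U T) u)⁻¹ m
      = (DistribMulAction.toMulAutMultiplicative U T) u⁻¹ m := by
  rw [← map_inv]

lemma ring_comm_id {R : Type*} [Ring R] {a b a' b' : R} (ha : a * a' = 1) (hb : b * b' = 1) :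
    1 - a * b * a' * b' = ((1 - b) * (1 - a) - (1 - a) * (1 - b)) * a' * b' := by
  have h1 : (1 - b) * (1 - a) - (1 - a) * (1 - b) = b * a - a * b := by noncomm_ring
  rw [h1, sub_mul, sub_mul, mul_assoc b a a', ha, mul_one, hb]

def Hgrp (l : ℕ) :
    Subgroup (Multiplicative T ⋊[DistribMulAction.toMulAutMultiplicative U T] U) where
  carrier := {x | Multiplicative.toAdd x.left ∈ A U T l ∧ (1 - e x.right) ∈ Ops U T (l + 1)}
  one_mem' := by
    refine ⟨by simpa using zero_mem (A U T l), ?_⟩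
    rw [show ((1 : Multiplicative T ⋊[DistribMulAction.toMulAutMultiplicative U T] U)).right
        = 1 from rfl, map_one, sub_self]
    exact zero_mem _
  mul_mem' := by
    rintro x y ⟨hxl, hxr⟩ ⟨hyl, hyr⟩
    refine ⟨?_, ?_⟩
    · rw [SemidirectProduct.mul_left, toAdd_mul, toAdd_phi]
      refine add_mem hxl ?_
      have h : x.right • Multiplicative.toAdd y.left ∈ A U T (0 + l) :=
        Ops_apply (e_mem_Ops0 x.right) hyl
      rwa [Nat.zero_add] at h
    · rw [SemidirectProduct.mul_right]
      have h : (1 : AddMonoid.End T) - e (x.right * y.right)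
          = (1 - e x.right) + e x.right * (1 - e y.right) := by
        rw [map_mul]; noncomm_ring
      rw [h]
      refine add_mem hxr ?_
      have h2 := Ops_mul (e_mem_Ops0 x.right) hyr
      rwa [Nat.zero_add] at h2
  inv_mem' := by
    rintro x ⟨hxl, hxr⟩
    refine ⟨?_, ?_⟩
    · rw [SemidirectProduct.inv_left, toAdd_phi, toAdd_inv]
      have h : x.right⁻¹ • (-(Multiplicative.toAdd x.left)) ∈ A U T (0 + l) :=
        Ops_apply (e_mem_Ops0 _) (neg_mem hxl)
      rwa [Nat.zero_add] at h
    · rw [SemidirectProduct.inv_right]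
      have h : (1 : AddMonoid.End T) - e x.right⁻¹ = -(e x.right⁻¹ * (1 - e x.right)) := by
        rw [mul_sub, mul_one, ← map_mul, inv_mul_cancel, map_one, neg_sub]
      rw [h]
      refine neg_mem ?_
      have h2 := Ops_mul (e_mem_Ops0 x.right⁻¹) hxr
      rwa [Nat.zero_add] at h2

lemma lcs_le (l : ℕ) :
    (⊤ : Subgroup (Multiplicative T ⋊[DistribMulAction.toMulAutMultiplicative U T] U)).lowerCentralSeries l
      ≤ Hgrp l := by
  induction l with
  | zero =>
    intro x _
    exact ⟨mem_A0 _, one_sub_mem _⟩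
  | succ l ih =>
    rw [Subgroup.lowerCentralSeries_succ]
    apply (Subgroup.closure_le _).2
    rintro x ⟨p, hp, q, -, rfl⟩
    obtain ⟨ha, hu⟩ := ih hp
    refine ⟨?_, ?_⟩
    · have key : Multiplicative.toAdd ((p * q * p⁻¹ * q⁻¹).left)
          = (Multiplicative.toAdd p.left
              - (p.right * q.right * p.right⁻¹) • Multiplicative.toAdd p.left)
            - (p.right * q.right * p.right⁻¹) •
                (q.right⁻¹ • Multiplicative.toAdd q.left
                  - p.right • q.right⁻¹ • Multiplicative.toAdd q.left) := by
        simp [SemidirectProduct.mul_left, SemidirectProduct.mul_right,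
          SemidirectProduct.inv_left, SemidirectProduct.inv_right,
          mul_smul, smul_sub, smul_neg, smul_add]
        abel
      rw [commutatorElement_def, key]
      refine sub_mem ?_ ?_
      · have h : Multiplicative.toAdd p.left
            - (p.right * q.right * p.right⁻¹) • Multiplicative.toAdd p.left
            ∈ A U T (1 + l) :=
          Ops_apply (one_sub_mem (p.right * q.right * p.right⁻¹)) ha
        rwa [Nat.add_comm] at h
      · have hOps : (e (p.right * q.right * p.right⁻¹) * (1 - e p.right) * e q.right⁻¹)
            ∈ Ops U T (l + 1) := by
          have h2 := Ops_mul (Ops_mul (e_mem_Ops0 (p.right * q.right * p.right⁻¹)) hu)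
            (e_mem_Ops0 q.right⁻¹)
          rwa [Nat.zero_add, Nat.add_zero] at h2
        exact Ops_apply' hOps (Multiplicative.toAdd q.left)
    · have hr : (p * q * p⁻¹ * q⁻¹).right = p.right * q.right * p.right⁻¹ * q.right⁻¹ := by
        simp [SemidirectProduct.mul_right, SemidirectProduct.inv_right]
      rw [commutatorElement_def, hr]
      have h : (1 : AddMonoid.End T) - e (p.right * q.right * p.right⁻¹ * q.right⁻¹)
          = ((1 - e q.right) * (1 - e p.right) - (1 - e p.right) * (1 - e q.right))
              * e p.right⁻¹ * e q.right⁻¹ := by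
        rw [map_mul, map_mul, map_mul]
        exact ring_comm_id (by rw [← map_mul, mul_inv_cancel, map_one])
          (by rw [← map_mul, mul_inv_cancel, map_one])
      rw [h]
      have h1 : ((1 - e q.right) * (1 - e p.right) - (1 - e p.right) * (1 - e q.right))
          ∈ Ops U T (l + 1 + 1) := by
        refine sub_mem ?_ ?_
        · have := Ops_mul (one_sub_mem q.right) hu
          rwa [Nat.add_comm] at this
        · exact Ops_mul hu (one_sub_mem q.right)
      have h2 := Ops_mul (Ops_mul h1 (e_mem_Ops0 p.right⁻¹)) (e_mem_Ops0 q.right⁻¹)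
      rwa [Nat.add_zero, Nat.add_zero] at h2

end SemidirectLCS

/-- In the semidirect product `G = U ⋉ T`, for every `(u, b) ∈ Γ_l G`, the element `b ∈ T`
is a finite sum of elements `± h₁(Id − g₁) ⋯ h_k(Id − g_k)·b'` with `k ≥ l`, `b' ∈ T` and
`gᵢ, hᵢ ∈ U`. -/
theorem semidirect_lowerCentralSeries_left_mem_closure
    {U T : Type*} [Group U] [AddCommGroup T] [DistribMulAction U T]
    (l : ℕ)
    (x : Multiplicative T ⋊[DistribMulAction.toMulAutMultiplicative U T] U)
    (hx : x ∈ (⊤ : Subgroup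
      (Multiplicative T ⋊[DistribMulAction.toMulAutMultiplicative U T] U)).lowerCentralSeries l) :
    Multiplicative.toAdd x.left ∈
      AddSubgroup.closure
        {t : T | ∃ k : ℕ, l ≤ k ∧ ∃ gs hs : Fin k → U, ∃ b' : T,
          t = (List.ofFn fun i =>
            DistribMulAction.toAddMonoidEnd U T (hs i) *
              (1 - DistribMulAction.toAddMonoidEnd U T (gs i))).prod b'} := by
  exact (SemidirectLCS.lcs_le l hx).1
end
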